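/- Let K be a field of characteristic zero, let q ∈ K[X] be nonzero with deg(q) ≤ d, and let β ∈ M_m(K(X)) be such that qβ has polynomial entries of degree at most d. Define the operator Γ on column vectors v ∈ K(X)^m by Γ(v) = βv − v′. Then for every column vector v ∈ K[X]^m with polynomial entries and every k ≥ 0, the vector q^k·Γ^k(v) has polynomial entries of degree at most deg(v) + k·d. -/

import Mathlib

/-- The operator `Γ` on column vectors: `Γ(v) = β v − v′`, the derivation `der`
being applied entrywise. -/
def cvGamma {F : Type*} [Field F] {m : ℕ} (der : F → F)
    (β : Matrix (Fin m) (Fin m) F) (v : Fin m → F) : Fin m → F :=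
  β.mulVec v - fun i => der (v i)

/-- If `q β` has polynomial entries of degree `≤ d` with `deg q ≤ d` and `v` is a
column vector of polynomials, then `q^k Γ^k(v)` has polynomial entries of degree
at most `deg v + k d`.  Here `der` is the derivation of `K(X)` extending `d/dX`. -/
theorem qk_gammak_polynomial_degree {K : Type*} [Field K] [CharZero K] {m : ℕ}
    (der : RatFunc K → RatFunc K)
    (h_add : ∀ a b : RatFunc K, der (a + b) = der a + der b)
    (h_mul : ∀ a b : RatFunc K, der (a * b) = a * der b + der a * b)
    (h_X : der RatFunc.X = 1)
    (h_C : ∀ c : K, der (RatFunc.C c) = 0)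
    (q : Polynomial K) (hq : q ≠ 0) (d : ℕ) (hqd : q.degree ≤ (d : WithBot ℕ))
    (β : Matrix (Fin m) (Fin m) (RatFunc K))
    (hβ : ∀ i j : Fin m, ∃ p : Polynomial K, p.degree ≤ (d : WithBot ℕ) ∧
      algebraMap (Polynomial K) (RatFunc K) q * β i j
        = algebraMap (Polynomial K) (RatFunc K) p)
    (v : Fin m → Polynomial K) (k : ℕ) :
    ∀ j : Fin m, ∃ p : Polynomial K,
      p.degree ≤ (((Finset.univ.sup fun l => (v l).natDegree) + k * d : ℕ) : WithBot ℕ) ∧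
      (algebraMap (Polynomial K) (RatFunc K) q) ^ k *
        (cvGamma der β)^[k] (fun l => algebraMap (Polynomial K) (RatFunc K) (v l)) j
        = algebraMap (Polynomial K) (RatFunc K) p := by
  classical
  set A := algebraMap (Polynomial K) (RatFunc K) with hA
  have h_der_poly : ∀ p : Polynomial K, der (A p) = A p.derivative := by
    intro p
    induction p using Polynomial.induction_on with
    | C c => simp [hA, RatFunc.algebraMap_C, h_C]
    | add p q hp hq => simp [map_add, h_add, hp, hq]
    | monomial n a ih =>
      have h1 : (Polynomial.C a * Polynomial.X ^ (n+1))
          = (Polynomial.C a * Polynomial.X ^ n) * Polynomial.X := by ring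
      rw [h1, map_mul, h_mul, ih, RatFunc.algebraMap_X, h_X]
      simp only [Polynomial.derivative_mul, Polynomial.derivative_X, Polynomial.derivative_C,
        map_add, map_mul, map_zero, mul_one, zero_mul, add_zero, RatFunc.algebraMap_X]
      rw [hA, RatFunc.algebraMap_X]
      ring
  choose a hadeg haeq using hβ
  induction k with
  | zero =>
      intro j
      refine ⟨v j, ?_, by simp⟩
      calc (v j).degree ≤ ((v j).natDegree : WithBot ℕ) := Polynomial.degree_le_natDegree
        _ ≤ _ := by
          have := Finset.le_sup (f := fun l => (v l).natDegree) (Finset.mem_univ j)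
          simp only [Nat.zero_eq, Nat.zero_mul, Nat.add_zero]
          exact_mod_cast this
  | succ k IH =>
      choose p hpdeg hpeq using IH
      intro j
      set D := Finset.univ.sup fun l => (v l).natDegree with hD
      set w := (cvGamma der β)^[k] (fun l => A (v l)) with hw
      set P := (∑ l : Fin m, a j l * p l) - q * (p j).derivative
          + (k : Polynomial K) * q.derivative * p j with hP
      have hcast : ∀ x y : ℕ, ((x : WithBot ℕ) + (y : WithBot ℕ)) = ((x + y : ℕ) : WithBot ℕ) := by
        intro x y; exact_mod_cast rfl
      have hbd : ∀ r : Polynomial K, r.degree ≤ (d : WithBot ℕ) + ((D + k * d : ℕ) : WithBot ℕ) →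
          r.degree ≤ ((D + (k+1) * d : ℕ) : WithBot ℕ) := by
        intro r hr
        refine hr.trans ?_
        rw [hcast]
        exact_mod_cast Nat.le_of_eq (by ring)
      refine ⟨P, ?_, ?_⟩
      · refine (Polynomial.degree_add_le _ _).trans (max_le ((Polynomial.degree_sub_le _ _).trans
          (max_le ?_ ?_)) ?_)
        · refine (Polynomial.degree_sum_le _ _).trans (Finset.sup_le fun l _ => ?_)
          exact hbd _ ((Polynomial.degree_mul_le _ _).trans (add_le_add (hadeg j l) (hpdeg l)))
        · exact hbd _ ((Polynomial.degree_mul_le _ _).trans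
            (add_le_add hqd (Polynomial.degree_derivative_le.trans (hpdeg j))))
        · refine hbd _ ?_
          refine (Polynomial.degree_mul_le _ _).trans ?_
          refine add_le_add ((Polynomial.degree_mul_le _ _).trans ?_) (hpdeg j)
          calc Polynomial.degree ((k : Polynomial K)) + q.derivative.degree
              ≤ 0 + (d : WithBot ℕ) :=
                add_le_add (Polynomial.degree_natCast_le k)
                  (Polynomial.degree_derivative_le.trans hqd)
            _ = (d : WithBot ℕ) := by simp
      · rw [Function.iterate_succ_apply', ← hw]
        have hgam : cvGamma der β w j = (∑ l : Fin m, β j l * w l) - der (w j) := by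
          simp [cvGamma, Matrix.mulVec, dotProduct]
        -- derivative identity
        have e1 : A (q ^ k) * der (w j) + A ((q ^ k).derivative) * w j
            = A ((p j).derivative) := by
          have h0 := congrArg der (hpeq j)
          rw [← map_pow, h_mul] at h0
          simp only [h_der_poly] at h0
          exact h0
        have hq' : A q ≠ 0 := by
          simp [hA, hq]
        have e2 : A q ^ (k+1) * der (w j)
            = A (q * (p j).derivative) - A ((k : Polynomial K) * q.derivative * p j) := by
          have hqq : q * (q ^ k).derivative = ((k : Polynomial K) * q.derivative) * q ^ k := by
            cases k with
            | zero => simp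
            | succ n =>
              rw [Polynomial.derivative_pow, Polynomial.C_eq_natCast]
              push_cast
              ring
          have e3 : A q * (A (q ^ k) * der (w j))
              = A q * A ((p j).derivative) - A q * (A ((q ^ k).derivative) * w j) := by
            linear_combination A q * e1
          have e4 : A q * (A ((q ^ k).derivative) * w j)
              = A ((k : Polynomial K) * q.derivative * p j) := by
            calc A q * (A ((q ^ k).derivative) * w j)
                = A ((k : Polynomial K) * q.derivative) * (A (q ^ k) * w j) := by
                  rw [← mul_assoc, ← map_mul, hqq, map_mul, mul_assoc]
              _ = A ((k : Polynomial K) * q.derivative) * A (p j) := by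
                  rw [map_pow]; rw [hpeq j]
              _ = _ := by rw [← map_mul]
          calc A q ^ (k+1) * der (w j) = A q * (A (q ^ k) * der (w j)) := by
                rw [map_pow]; ring
            _ = _ := by rw [e3, e4, ← map_mul]
        have hsum : A q ^ (k+1) * (∑ l : Fin m, β j l * w l)
            = ∑ l : Fin m, A (a j l * p l) := by
          rw [Finset.mul_sum]
          refine Finset.sum_congr rfl fun l _ => ?_
          calc A q ^ (k+1) * (β j l * w l) = (A q * β j l) * (A q ^ k * w l) := by ring
            _ = A (a j l) * A (p l) := by rw [haeq j l, hpeq l]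
            _ = A (a j l * p l) := by rw [map_mul]
        rw [hgam, mul_sub, e2, hsum, hP, map_add, map_sub, map_sum]
        ring
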